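/- Let f : [a,b] → ℝ be a continuous function and let ε > 0. Then every column of the ε-pixelation of the graph of f consists of a single stack; that is, for every ε-generic point x ∈ [a,b], the column C_ε(Γ_f, x) of P_ε(Γ_f) over x is nonempty and connected, where Γ_f = {(x, f(x)) : x ∈ [a,b]}. -/

import Mathlib

open Set Filter

/-- An `ε`-pixel: the square `[(i-1)ε, iε] × [(j-1)ε, jε]`. -/
def Pixel (ε : ℝ) (i j : ℤ) : Set (ℝ × ℝ) :=
  Icc ((i - 1) * ε) (i * ε) ×ˢ Icc ((j - 1) * ε) (j * ε)

/-- The `ε`-pixelation of a set `S`: the union of all `ε`-pixels meeting `S`. -/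
def Pixelation (ε : ℝ) (S : Set (ℝ × ℝ)) : Set (ℝ × ℝ) :=
  ⋃ (i : ℤ) (j : ℤ) (_ : (Pixel ε i j ∩ S).Nonempty), Pixel ε i j

/-- A point `a` is `ε`-generic if `a ∉ εℤ`. -/
def EpsGeneric (ε a : ℝ) : Prop := ∀ n : ℤ, a ≠ n * ε

/-- The column of the `ε`-pixelation of `S` over a point `a`: the union of the
`ε`-pixels of `P_ε(S)` that meet the vertical line `{x = a}`. -/
def Column (ε : ℝ) (S : Set (ℝ × ℝ)) (a : ℝ) : Set (ℝ × ℝ) :=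
  ⋃ (i : ℤ) (j : ℤ) (_ : (Pixel ε i j ∩ S).Nonempty)
    (_ : a ∈ Icc ((i - 1) * ε) (i * ε)), Pixel ε i j

/-- A semialgebraic subset of `ℝⁿ`: a finite union of sets, each described by finitely
many polynomial equations and finitely many (strict) polynomial inequalities. -/
def IsSemialgebraic {n : ℕ} (X : Set (Fin n → ℝ)) : Prop :=
  ∃ F : Finset (Finset (MvPolynomial (Fin n) ℝ) × Finset (MvPolynomial (Fin n) ℝ)),
    X = ⋃ c ∈ F,
      {x | (∀ p ∈ c.1, MvPolynomial.eval x p = 0) ∧ ∀ q ∈ c.2, 0 < MvPolynomial.eval x q}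

/-- Semialgebraic subsets of the plane `ℝ × ℝ`. -/
def IsSemialgebraic2 (X : Set (ℝ × ℝ)) : Prop :=
  IsSemialgebraic {z : Fin 2 → ℝ | (z 0, z 1) ∈ X}

/-- A function `f` is semialgebraic on `[a,b]` if its graph over `[a,b]` is semialgebraic. -/
def IsSemialgebraicFnOn (f : ℝ → ℝ) (a b : ℝ) : Prop :=
  IsSemialgebraic2 {p : ℝ × ℝ | p.1 ∈ Icc a b ∧ p.2 = f p.1}

/-- The set of connected components of a planar set. -/
def componentsOf (A : Set (ℝ × ℝ)) : Set (Set (ℝ × ℝ)) :=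
  {C | ∃ x ∈ A, C = connectedComponentIn A x}

/-- The number of connected components of a planar set. -/
noncomputable def numComponents (A : Set (ℝ × ℝ)) : ℕ := (componentsOf A).ncard

/-- The component counter `n_S(x)`: the number of connected components of the
intersection of `S` with the vertical line `{x = x₀}`. -/
noncomputable def compCounter (S : Set (ℝ × ℝ)) (x : ℝ) : ℕ :=
  numComponents (S ∩ {p : ℝ × ℝ | p.1 = x})

/-- The stack counter `n_{S,ε}(x)`: the number of connected components of the column
of `P_ε(S)` over `x`. -/
noncomputable def stackCounter (S : Set (ℝ × ℝ)) (ε x : ℝ) : ℕ :=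
  numComponents (Column ε S x)

/-- A jumping point of the component counter: a point where `n_S` differs from its
left limit or from its right limit. -/
def IsJumpingPoint (S : Set (ℝ × ℝ)) (x₀ : ℝ) : Prop :=
  ¬ (∀ᶠ x in nhdsWithin x₀ (Iio x₀), compCounter S x = compCounter S x₀) ∨
  ¬ (∀ᶠ x in nhdsWithin x₀ (Ioi x₀), compCounter S x = compCounter S x₀)

/-- A jumping point of the stack counter `n_{S,ε}`: a point `x₀ ∈ εℤ + ε/2` with
`n_{S,ε}(x₀ - ε) ≠ n_{S,ε}(x₀)`. -/
def IsEpsJumpingPoint (S : Set (ℝ × ℝ)) (ε x₀ : ℝ) : Prop :=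
  (∃ k : ℤ, x₀ = k * ε + ε / 2) ∧ stackCounter S ε (x₀ - ε) ≠ stackCounter S ε x₀

/-- If `f : [a,b] → ℝ` is continuous, then for every `ε > 0` every
column of the `ε`-pixelation of the graph of `f` consists of a single stack: for every
`ε`-generic `x ∈ [a,b]`, the column `C_ε(Γ_f, x)` is nonempty and connected. -/
theorem column_of_graph_pixelation_isConnected
    (a b : ℝ) (hab : a ≤ b) (f : ℝ → ℝ) (hf : ContinuousOn f (Icc a b))
    (ε : ℝ) (hε : 0 < ε) (x : ℝ) (hx : x ∈ Icc a b) (hgen : EpsGeneric ε x) :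
    IsConnected (Column ε {p : ℝ × ℝ | p.1 ∈ Icc a b ∧ p.2 = f p.1} x) := by
  classical
  set S := {p : ℝ × ℝ | p.1 ∈ Icc a b ∧ p.2 = f p.1} with hS
  set i₀ : ℤ := ⌈x / ε⌉ with hi₀
  have hxle : x ≤ (i₀ : ℝ) * ε := by
    have h := Int.le_ceil (x / ε)
    have := (div_le_iff₀ hε).mp h
    linarith
  have hxge : ((i₀ : ℝ) - 1) * ε ≤ x := by
    have h : ((i₀ : ℝ) - 1) < x / ε := by
      have := Int.ceil_lt_add_one (x / ε)
      push_cast at this ⊢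
      linarith
    nlinarith [(lt_div_iff₀ hε).mp h]
  -- the base interval
  set I : Set ℝ := Icc a b ∩ Icc (((i₀ : ℝ) - 1) * ε) ((i₀ : ℝ) * ε) with hI
  have hxI : x ∈ I := ⟨hx, hxge, hxle⟩
  set G : Set (ℝ × ℝ) := (fun t => (t, f t)) '' I with hG
  have hIpre : IsPreconnected I := by
    rw [isPreconnected_iff_ordConnected]
    exact Set.ordConnected_Icc.inter Set.ordConnected_Icc
  have hGpre : IsPreconnected G :=
    hIpre.image _ (continuousOn_id.prodMk (hf.mono Set.inter_subset_left))
  -- uniqueness of the column index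
  have huniq : ∀ i : ℤ, x ∈ Icc (((i : ℝ) - 1) * ε) ((i : ℝ) * ε) → i = i₀ := by
    intro i hi
    have h1 : ((i : ℝ) - 1) * ε < x := lt_of_le_of_ne hi.1 (by
      intro h; exact hgen (i - 1) (by push_cast; linarith))
    have h2 : x < (i : ℝ) * ε := lt_of_le_of_ne hi.2 (fun h => hgen i h)
    have : ⌈x / ε⌉ = i := by
      rw [Int.ceil_eq_iff]
      constructor
      · push_cast
        exact (lt_div_iff₀ hε).mpr (by linarith)
      · exact (div_le_iff₀ hε).mpr h2.le
    omega
  -- G sits inside the column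
  have hGsub : G ⊆ Column ε S x := by
    rintro _ ⟨t, ht, rfl⟩
    have hpix : (t, f t) ∈ Pixel ε i₀ ⌈f t / ε⌉ := by
      refine ⟨⟨ht.2.1, ht.2.2⟩, ?_, ?_⟩
      · have h : ((⌈f t / ε⌉ : ℝ) - 1) < f t / ε := by
          have := Int.ceil_lt_add_one (f t / ε); push_cast at this ⊢; linarith
        nlinarith [(lt_div_iff₀ hε).mp h]
      · have := (div_le_iff₀ hε).mp (Int.le_ceil (f t / ε)); linarith
    refine Set.mem_iUnion.mpr ⟨i₀, Set.mem_iUnion.mpr ⟨⌈f t / ε⌉,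
      Set.mem_iUnion.mpr ⟨⟨(t, f t), hpix, ht.1, rfl⟩,
      Set.mem_iUnion.mpr ⟨⟨hxge, hxle⟩, hpix⟩⟩⟩⟩
  refine ⟨⟨(x, f x), hGsub ⟨x, hxI, rfl⟩⟩, ?_⟩
  apply isPreconnected_of_forall ((x, f x) : ℝ × ℝ)
  intro y hy
  simp only [Column, Set.mem_iUnion] at hy
  obtain ⟨i, j, hne, hxi, hyP⟩ := hy
  have hii : i = i₀ := huniq i hxi
  subst hii
  obtain ⟨p, hpP, hpS⟩ := hne
  have hpG : p ∈ G := by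
    exact ⟨p.1, ⟨hpS.1, hpP.1⟩, Prod.ext rfl hpS.2.symm⟩
  refine ⟨Pixel ε i₀ j ∪ G, ?_, Or.inr ⟨x, hxI, rfl⟩, Or.inl hyP, ?_⟩
  · apply Set.union_subset _ hGsub
    intro z hz
    exact Set.mem_iUnion.mpr ⟨i₀, Set.mem_iUnion.mpr ⟨j,
      Set.mem_iUnion.mpr ⟨⟨p, hpP, hpS⟩, Set.mem_iUnion.mpr ⟨hxi, hz⟩⟩⟩⟩
  · exact IsPreconnected.union p hpP hpG
      (isPreconnected_Icc.prod isPreconnected_Icc) hGpre
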